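/- Let q(z) = q₀z² + 2q₁z + q₂ be a real quadratic. For a real polynomial P of degree at most 4, set τ(q,P) = 6q''P − 3q'P' + qP'' (where q'' = 2q₀ is constant). Then τ(q,P) is a polynomial of degree at most 2; and if q is nonzero, the linear map P ↦ τ(q,P) from the space of real polynomials of degree at most 4 onto the space of real polynomials of degree at most 2 is surjective. -/

import Mathlib

/-- The second transvectant `τ(q,P) = 6q''P − 3q'P' + qP''` of the quadratic
`q(z) = q₀z² + 2q₁z + q₂` (so `q'' = 2q₀`) with the quartic
`P(z) = c₀z⁴ + c₁z³ + c₂z² + c₃z + c₄`. -/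
noncomputable def transvectant2 (q0 q1 q2 c0 c1 c2 c3 c4 z : ℝ) : ℝ :=
  6 * (2 * q0) * (c0 * z ^ 4 + c1 * z ^ 3 + c2 * z ^ 2 + c3 * z + c4)
    - 3 * (2 * q0 * z + 2 * q1) * (4 * c0 * z ^ 3 + 3 * c1 * z ^ 2 + 2 * c2 * z + c3)
    + (q0 * z ^ 2 + 2 * q1 * z + q2) * (12 * c0 * z ^ 2 + 6 * c1 * z + 2 * c2)

lemma transvectant2_eq (q0 q1 q2 c0 c1 c2 c3 c4 z : ℝ) :
    transvectant2 q0 q1 q2 c0 c1 c2 c3 c4 z =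
      (2 * q0 * c2 - 6 * q1 * c1 + 12 * q2 * c0) * z ^ 2
        + (6 * q0 * c3 - 8 * q1 * c2 + 6 * q2 * c1) * z
        + (12 * q0 * c4 - 6 * q1 * c3 + 2 * q2 * c2) := by
  unfold transvectant2; ring

/-- `τ(q,P)` is a polynomial of degree at most 2, and when `q ≠ 0` the map
`P ↦ τ(q,P)` from quartics onto quadratics is surjective. -/
theorem transvectant2_quadratic_surjective (q0 q1 q2 : ℝ) :
    (∀ c0 c1 c2 c3 c4 : ℝ, ∃ e0 e1 e2 : ℝ, ∀ z : ℝ,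
        transvectant2 q0 q1 q2 c0 c1 c2 c3 c4 z = e0 * z ^ 2 + e1 * z + e2)
    ∧ (¬(q0 = 0 ∧ q1 = 0 ∧ q2 = 0) →
      ∀ e0 e1 e2 : ℝ, ∃ c0 c1 c2 c3 c4 : ℝ, ∀ z : ℝ,
        transvectant2 q0 q1 q2 c0 c1 c2 c3 c4 z = e0 * z ^ 2 + e1 * z + e2) := by
  constructor
  · intro c0 c1 c2 c3 c4
    exact ⟨_, _, _, fun z => transvectant2_eq q0 q1 q2 c0 c1 c2 c3 c4 z⟩
  · intro hq e0 e1 e2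
    by_cases h0 : q0 = 0
    · by_cases h1 : q1 = 0
      · have h2 : q2 ≠ 0 := fun h2 => hq ⟨h0, h1, h2⟩
        refine ⟨e0 / (12 * q2), e1 / (6 * q2), e2 / (2 * q2), 0, 0, fun z => ?_⟩
        rw [transvectant2_eq, h0, h1]
        field_simp
        ring
      · refine ⟨0, -e0 / (6 * q1), (6 * q2 * (-e0 / (6 * q1)) - e1) / (8 * q1),
          (2 * q2 * ((6 * q2 * (-e0 / (6 * q1)) - e1) / (8 * q1)) - e2) / (6 * q1),
          0, fun z => ?_⟩
        rw [transvectant2_eq, h0]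
        field_simp
        ring
    · refine ⟨0, 0, e0 / (2 * q0), (e1 + 8 * q1 * (e0 / (2 * q0))) / (6 * q0),
        (e2 + 6 * q1 * ((e1 + 8 * q1 * (e0 / (2 * q0))) / (6 * q0))
          - 2 * q2 * (e0 / (2 * q0))) / (12 * q0), fun z => ?_⟩
      rw [transvectant2_eq]
      field_simp
      ring
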